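/- Let A be a complete filtered associative algebra over a field of characteristic zero, with decreasing filtration {A_n} satisfying A_m A_n ⊆ A_{m+n}, and let P: A → A be a linear filtration-preserving map with P̃ = id − P. For each a ∈ A_1, the map F_a(b) = a − BCH(P(b), P̃(b)) is a contraction on A_1 with respect to the ultrametric induced by the filtration: for b ∈ A_1 and ε ∈ A_n, F_a(b+ε) − F_a(b) ∈ A_{n+1}. -/

import Mathlib

open scoped BigOperators

noncomputable def expS (K : Type*) {A : Type*} [Field K] [CharZero K] [Ring A] [Algebra K A]
    [UniformSpace A] (a : A) : A :=
  ∑' n : ℕ, ((n.factorial : K)⁻¹) • a ^ n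

noncomputable def logS (K : Type*) {A : Type*} [Field K] [CharZero K] [Ring A] [Algebra K A]
    [UniformSpace A] (a : A) : A :=
  ∑' n : ℕ, (((-1 : K) ^ n) * ((n : K) + 1)⁻¹) • (a - 1) ^ (n + 1)

noncomputable def BCHs (K : Type*) {A : Type*} [Field K] [CharZero K] [Ring A] [Algebra K A]
    [UniformSpace A] (x y : A) : A :=
  logS K (expS K x * expS K y) - x - y

/-- A complete decreasing multiplicative filtration defining the topology of `A`. -/
def IsCompleteFiltration (K : Type*) {A : Type*} [Field K] [CharZero K] [Ring A] [Algebra K A]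
    [UniformSpace A] (F : ℕ → Submodule K A) : Prop :=
  F 0 = ⊤ ∧ (∀ n, F (n + 1) ≤ F n) ∧
    (∀ m n : ℕ, ∀ x ∈ F m, ∀ y ∈ F n, x * y ∈ F (m + n)) ∧
    (∀ n, IsOpen ((F n : Set A))) ∧
    (∀ U ∈ nhds (0 : A), ∃ n, ((F n : Set A)) ⊆ U)

variable {K : Type*} [Field K] [CharZero K] {A : Type*} [Ring A] [Algebra K A]
  [UniformSpace A] [CompleteSpace A] [T2Space A] [IsTopologicalRing A]
  [IsUniformAddGroup A]

namespace BCHaux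

variable {F : ℕ → Submodule K A}

lemma mono (hF : IsCompleteFiltration K F) : Antitone F :=
  antitone_nat_of_succ_le hF.2.1

lemma isClosedF (hF : IsCompleteFiltration K F) (n : ℕ) : IsClosed (F n : Set A) :=
  AddSubgroup.isClosed_of_isOpen ((F n).toAddSubgroup) (hF.2.2.2.1 n)

lemma summable_of_mem (hF : IsCompleteFiltration K F) {f : ℕ → A}
    (hf : ∀ k, f k ∈ F k) : Summable f := by
  refine summable_iff_vanishing.2 fun e he => ?_
  obtain ⟨m, hm⟩ := hF.2.2.2.2 e he
  refine ⟨Finset.range m, fun t ht => hm ?_⟩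
  have : ∑ i ∈ t, f i ∈ F m := by
    refine Submodule.sum_mem _ fun i hi => ?_
    have hmi : m ≤ i := by
      by_contra h
      exact (Finset.disjoint_left.1 ht hi) (Finset.mem_range.2 (not_le.1 h))
    exact mono hF hmi (hf i)
  exact this

lemma tsum_mem (hF : IsCompleteFiltration K F) {f : ℕ → A} (hs : Summable f) {m : ℕ}
    (hf : ∀ k, f k ∈ F m) : ∑' k, f k ∈ F m :=
  (isClosedF hF m).mem_of_tendsto hs.hasSum
    (Filter.Eventually.of_forall fun s => Submodule.sum_mem _ fun i _ => hf i)

lemma pow_mem (hF : IsCompleteFiltration K F) {x : A} (hx : x ∈ F 1) :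
    ∀ k, x ^ k ∈ F k
  | 0 => by rw [pow_zero, hF.1]; exact Submodule.mem_top
  | (k+1) => by
      rw [pow_succ]
      exact hF.2.2.1 k 1 _ (pow_mem hF hx k) x hx

lemma pow_sub_pow (hF : IsCompleteFiltration K F) {x x' : A} (hx : x ∈ F 1) (hx' : x' ∈ F 1)
    {n : ℕ} (hd : x - x' ∈ F n) : ∀ k, x ^ (k+1) - x' ^ (k+1) ∈ F (n + k)
  | 0 => by simpa using hd
  | (k+1) => by
      have h1 : (x ^ (k+1) - x' ^ (k+1)) * x ∈ F (n + k + 1) :=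
        hF.2.2.1 (n+k) 1 _ (pow_sub_pow hF hx hx' hd k) x hx
      have h2 : x' ^ (k+1) * (x - x') ∈ F (k + 1 + n) :=
        hF.2.2.1 (k+1) n _ (pow_mem hF hx' (k+1)) _ hd
      have heq : x ^ (k+1+1) - x' ^ (k+1+1)
          = (x ^ (k+1) - x' ^ (k+1)) * x + x' ^ (k+1) * (x - x') := by
        simp only [pow_succ]
        noncomm_ring
      have harith : k + 1 + n = n + (k + 1) := by omega
      rw [heq]
      exact Submodule.add_mem _ h1 (harith ▸ h2)

lemma expS_summable (hF : IsCompleteFiltration K F) {x : A} (hx : x ∈ F 1) :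
    Summable (fun k : ℕ => ((k.factorial : K)⁻¹) • x ^ k) :=
  summable_of_mem hF fun k => Submodule.smul_mem _ _ (pow_mem hF hx k)

lemma expS_sub_one_mem (hF : IsCompleteFiltration K F) {x : A} (hx : x ∈ F 1) :
    expS K x - 1 ∈ F 1 := by
  have hs := expS_summable (K := K) hF hx
  have h0 : expS K x = 1 + ∑' k : ℕ, (((k+1).factorial : K)⁻¹) • x ^ (k+1) := by
    rw [expS, Summable.tsum_eq_zero_add hs]
    simp
  rw [h0, add_sub_cancel_left]
  exact tsum_mem hF ((summable_nat_add_iff 1).2 hs)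
    (fun k => Submodule.smul_mem _ _ (mono hF (by omega) (pow_mem hF hx (k+1))))

lemma expS_sub_mem (hF : IsCompleteFiltration K F) {x x' : A} (hx : x ∈ F 1) (hx' : x' ∈ F 1)
    {n : ℕ} (hn : 1 ≤ n) (hd : x - x' ∈ F n) :
    expS K x - expS K x' - (x - x') ∈ F (n + 1) := by
  set f : ℕ → A := fun k => ((k.factorial : K)⁻¹) • (x ^ k - x' ^ k) with hfdef
  have hfk : ∀ k, f k ∈ F k := by
    intro k
    cases k with
    | zero => simp [hfdef]
    | succ k =>
        exact Submodule.smul_mem _ _ (mono hF (by omega) (pow_sub_pow hF hx hx' hd k))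
  have hsf : Summable f := summable_of_mem hF hfk
  have hdiff : expS K x - expS K x' = ∑' k, f k := by
    rw [expS, expS, ← Summable.tsum_sub (expS_summable hF hx) (expS_summable hF hx')]
    simp [hfdef, smul_sub]
  have hsf1 : Summable (fun k => f (k + 1)) := (summable_nat_add_iff 1).2 hsf
  have hsplit : ∑' k, f k = f 0 + (f 1 + ∑' k, f (k + 1 + 1)) := by
    rw [Summable.tsum_eq_zero_add hsf, Summable.tsum_eq_zero_add hsf1]
  have hrem : ∑' k, f (k + 1 + 1) ∈ F (n + 1) := by
    refine tsum_mem hF ((summable_nat_add_iff 1).2 hsf1) fun k => ?_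
    exact Submodule.smul_mem _ _ (mono hF (by omega) (pow_sub_pow hF hx hx' hd (k+1)))
  have hf0 : f 0 = 0 := by simp [hfdef]
  have hf1 : f 1 = x - x' := by simp [hfdef]
  rw [hdiff, hsplit, hf0, hf1]
  simpa using hrem

lemma logS_summable (hF : IsCompleteFiltration K F) {u : A} (hu : u ∈ F 1) :
    Summable (fun k : ℕ => (((-1 : K) ^ k) * ((k : K) + 1)⁻¹) • u ^ (k + 1)) :=
  summable_of_mem hF fun k =>
    Submodule.smul_mem _ _ (mono hF (by omega) (pow_mem hF hu (k+1)))

lemma logS_sub_mem (hF : IsCompleteFiltration K F) {u u' : A} (hu : u ∈ F 1) (hu' : u' ∈ F 1)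
    {n : ℕ} (hn : 1 ≤ n) (hd : u - u' ∈ F n) :
    logS K (1 + u) - logS K (1 + u') - (u - u') ∈ F (n + 1) := by
  set f : ℕ → A := fun k => (((-1 : K) ^ k) * ((k : K) + 1)⁻¹) • (u ^ (k+1) - u' ^ (k+1))
    with hfdef
  have hfk : ∀ k, f k ∈ F k := fun k =>
    Submodule.smul_mem _ _ (mono hF (by omega) (pow_sub_pow hF hu hu' hd k))
  have hsf : Summable f := summable_of_mem hF hfk
  have hlog : ∀ v : A, logS K (1 + v) =
      ∑' k : ℕ, (((-1 : K) ^ k) * ((k : K) + 1)⁻¹) • v ^ (k + 1) := by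
    intro v; rw [logS]; simp
  have hdiff : logS K (1 + u) - logS K (1 + u') = ∑' k, f k := by
    rw [hlog u, hlog u', ← Summable.tsum_sub (logS_summable hF hu) (logS_summable hF hu')]
    simp [hfdef, smul_sub]
  have hsplit : ∑' k, f k = f 0 + ∑' k, f (k + 1) := Summable.tsum_eq_zero_add hsf
  have hrem : ∑' k, f (k + 1) ∈ F (n + 1) := by
    refine tsum_mem hF ((summable_nat_add_iff 1).2 hsf) fun k => ?_
    exact Submodule.smul_mem _ _ (mono hF (by omega) (pow_sub_pow hF hu hu' hd (k+1)))
  have hf0 : f 0 = u - u' := by simp [hfdef]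
  rw [hdiff, hsplit, hf0]
  simpa using hrem

end BCHaux

open BCHaux in
theorem stmt0 (F : ℕ → Submodule K A) (hF : IsCompleteFiltration K F)
    (P : A →ₗ[K] A) (hP : ∀ n, ∀ x ∈ F n, P x ∈ F n)
    (a b ε : A) (ha : a ∈ F 1) (hb : b ∈ F 1) (n : ℕ) (hn : 1 ≤ n) (hε : ε ∈ F n) :
    (a - BCHs K (P (b + ε)) ((b + ε) - P (b + ε))) - (a - BCHs K (P b) (b - P b)) ∈ F (n + 1) := by
  set x := P (b + ε) with hxdef
  set y := b + ε - P (b + ε) with hydef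
  set x' := P b with hx'def
  set y' := b - P b with hy'def
  have hbε : b + ε ∈ F 1 := add_mem hb (mono hF hn hε)
  have hx1 : x ∈ F 1 := hP 1 _ hbε
  have hy1 : y ∈ F 1 := sub_mem hbε hx1
  have hx'1 : x' ∈ F 1 := hP 1 b hb
  have hy'1 : y' ∈ F 1 := sub_mem hb hx'1
  have hdx : x - x' ∈ F n := by
    have hx : x - x' = P ε := by
      rw [hxdef, hx'def, ← map_sub]
      congr 1
      abel
    rw [hx]
    exact hP n ε hε
  have hdy : y - y' ∈ F n := by
    have hy : y - y' = ε - (x - x') := by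
      rw [hydef, hy'def, hxdef, hx'def]
      abel
    rw [hy]
    exact sub_mem hε hdx
  have hxy : x - x' + (y - y') = ε := by
    rw [hxdef, hydef, hx'def, hy'def]
    abel
  have hr1 := expS_sub_mem hF hy1 hy'1 hn hdy
  have hr2 := expS_sub_mem hF hx1 hx'1 hn hdx
  have hs : expS K x - 1 ∈ F 1 := expS_sub_one_mem hF hx1
  have hsy : expS K y - 1 ∈ F 1 := expS_sub_one_mem hF hy1
  have hsx' : expS K x' - 1 ∈ F 1 := expS_sub_one_mem hF hx'1
  have ht : expS K y' - 1 ∈ F 1 := expS_sub_one_mem hF hy'1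
  -- u = exp x * exp y - 1 ∈ F 1
  have humem : ∀ v w : A, expS K v - 1 ∈ F 1 → expS K w - 1 ∈ F 1 →
      expS K v * expS K w - 1 ∈ F 1 := by
    intro v w hv hw
    have hvw : expS K v * expS K w - 1
        = (expS K v - 1) + (expS K w - 1) + (expS K v - 1) * (expS K w - 1) := by
      noncomm_ring
    rw [hvw]
    exact add_mem (add_mem hv hw) (mono hF (by omega) (hF.2.2.1 1 1 _ hv _ hw))
  have hu1 : expS K x * expS K y - 1 ∈ F 1 := humem x y hs hsy
  have hu'1 : expS K x' * expS K y' - 1 ∈ F 1 := humem x' y' hsx' ht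
  -- The key difference estimate for u - u' - ε
  have hud : (expS K x * expS K y - 1) - (expS K x' * expS K y' - 1) - ε ∈ F (n + 1) := by
    have key : (expS K x * expS K y - 1) - (expS K x' * expS K y' - 1) - ε
        = (expS K x - 1) * (y - y')
          + (expS K y - expS K y' - (y - y'))
          + (expS K x - 1) * (expS K y - expS K y' - (y - y'))
          + (x - x') * (expS K y' - 1)
          + (expS K x - expS K x' - (x - x'))
          + (expS K x - expS K x' - (x - x')) * (expS K y' - 1) := by
      rw [← hxy]
      noncomm_ring
    rw [key]
    have h1 : (expS K x - 1) * (y - y') ∈ F (n + 1) := by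
      have := hF.2.2.1 1 n _ hs _ hdy
      rwa [Nat.add_comm 1 n] at this
    have h3 : (expS K x - 1) * (expS K y - expS K y' - (y - y')) ∈ F (n + 1) := by
      have := hF.2.2.1 1 (n+1) _ hs _ hr1
      exact mono hF (by omega) this
    have h4 : (x - x') * (expS K y' - 1) ∈ F (n + 1) := hF.2.2.1 n 1 _ hdx _ ht
    have h6 : (expS K x - expS K x' - (x - x')) * (expS K y' - 1) ∈ F (n + 1) := by
      have := hF.2.2.1 (n+1) 1 _ hr2 _ ht
      exact mono hF (by omega) this
    exact add_mem (add_mem (add_mem (add_mem (add_mem h1 hr1) h3) h4) hr2) h6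
  have hud' : (expS K x * expS K y - 1) - (expS K x' * expS K y' - 1) ∈ F n := by
    have heq : (expS K x * expS K y - 1) - (expS K x' * expS K y' - 1)
        = ((expS K x * expS K y - 1) - (expS K x' * expS K y' - 1) - ε) + ε := by
      abel
    rw [heq]
    exact add_mem (mono hF (by omega) hud) hε
  have hlog := logS_sub_mem hF hu1 hu'1 hn hud'
  have h1u : (1 : A) + (expS K x * expS K y - 1) = expS K x * expS K y := by abel
  have h1u' : (1 : A) + (expS K x' * expS K y' - 1) = expS K x' * expS K y' := by abel
  rw [h1u, h1u'] at hlog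
  have final_eq : (a - BCHs K x y) - (a - BCHs K x' y')
      = -((logS K (expS K x * expS K y) - logS K (expS K x' * expS K y')
            - ((expS K x * expS K y - 1) - (expS K x' * expS K y' - 1)))
          + ((expS K x * expS K y - 1) - (expS K x' * expS K y' - 1) - ε)) := by
    rw [BCHs, BCHs, ← hxy]
    abel
  rw [final_eq]
  exact neg_mem (add_mem hlog hud)
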